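/- Let f: ℝ × ℝ → ℝ be continuous and assume there exist constants x₀, δ, c ≥ 0 such that f(x,y) ≥ δ for all x, y ≥ x₀ and f(x,y) ≥ -c for all x, y ∈ ℝ. Let t₀ ≥ 0 and let d, u: [t₀, ∞) → ℝ be continuous with d(t) ≤ δ for all t ≥ t₀. If z: [t₀-1, ∞) → ℝ is continuous with z(t₀) ≤ x₀ and satisfies z(t) = z(t₀) + ∫_{t₀}^t [-f(z(s-1), z(s)) + d(s)] ds + u(t) - u(t₀) for all t ≥ t₀, then for every t ≥ t₀ there exists a ∈ [t₀, t] such that z(t) ≤ max{x₀, x₀ + c + δ + u(t) - u(a)}. -/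

import Mathlib

open MeasureTheory intervalIntegral

theorem stmt_4 (f : ℝ × ℝ → ℝ) (hf : Continuous f)
    (x₀ δ c : ℝ) (hx₀ : 0 ≤ x₀) (hδ : 0 ≤ δ) (hc : 0 ≤ c)
    (hfδ : ∀ x y : ℝ, x₀ ≤ x → x₀ ≤ y → δ ≤ f (x, y))
    (hfc : ∀ x y : ℝ, -c ≤ f (x, y))
    (t₀ : ℝ) (ht₀ : 0 ≤ t₀)
    (d u : ℝ → ℝ) (hd : ContinuousOn d (Set.Ici t₀)) (hu : ContinuousOn u (Set.Ici t₀))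
    (hdδ : ∀ t, t₀ ≤ t → d t ≤ δ)
    (z : ℝ → ℝ) (hz : ContinuousOn z (Set.Ici (t₀ - 1)))
    (hz0 : z t₀ ≤ x₀)
    (heq : ∀ t, t₀ ≤ t →
      z t = z t₀ + (∫ s in t₀..t, (-(f (z (s - 1), z s)) + d s)) + u t - u t₀) :
    ∀ t, t₀ ≤ t → ∃ a ∈ Set.Icc t₀ t,
      z t ≤ max x₀ (x₀ + c + δ + (u t - u a)) := by
  intro t ht
  -- trivial case: z t ≤ x₀
  by_cases hzt : z t ≤ x₀
  · exact ⟨t, ⟨ht, le_refl t⟩, le_trans hzt (le_max_left _ _)⟩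
  push_neg at hzt
  -- the integrand
  set g : ℝ → ℝ := fun s => -(f (z (s - 1), z s)) + d s with hgdef
  have hz1 : ContinuousOn (fun s => z (s - 1)) (Set.Ici t₀) := by
    apply hz.comp (continuous_id.sub continuous_const).continuousOn
    intro s hs
    simp only [Set.mem_Ici, id_eq, Pi.sub_apply] at *
    linarith
  have hzt0 : ContinuousOn z (Set.Ici t₀) :=
    hz.mono (Set.Ici_subset_Ici.mpr (by linarith))
  have hg : ContinuousOn g (Set.Ici t₀) :=
    ((hf.comp_continuousOn (hz1.prodMk hzt0)).neg).add hd
  have hgint : ∀ p q : ℝ, t₀ ≤ p → t₀ ≤ q → IntervalIntegrable g volume p q := by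
    intro p q hp hq
    apply (hg.mono ?_).intervalIntegrable
    intro s hs
    rcases Set.mem_uIcc.mp hs with h | h
    · exact le_trans hp h.1
    · exact le_trans hq h.1
  -- the set of times where z ≤ x₀
  set S : Set ℝ := Set.Icc t₀ t ∩ z ⁻¹' Set.Iic x₀ with hSdef
  have hSne : S.Nonempty := ⟨t₀, ⟨le_refl _, ht⟩, hz0⟩
  have hSbdd : BddAbove S := ⟨t, fun s hs => hs.1.2⟩
  have hSclosed : IsClosed S := by
    have hzc : ContinuousOn z (Set.Icc t₀ t) :=
      hz.mono (fun s hs => le_trans (by linarith) hs.1)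
    exact hzc.preimage_isClosed_of_isClosed isClosed_Icc isClosed_Iic
  set a : ℝ := sSup S with hadef
  have haS : a ∈ S := hSclosed.csSup_mem hSne hSbdd
  have ht₀a : t₀ ≤ a := haS.1.1
  have hat' : a ≤ t := haS.1.2
  have hza : z a ≤ x₀ := haS.2
  have hat : a < t := lt_of_le_of_ne hat' (fun h => absurd (h ▸ hza) (not_le.mpr hzt))
  -- z > x₀ on (a, t]
  have hgt : ∀ s ∈ Set.Ioc a t, x₀ < z s := by
    intro s hs
    by_contra h
    push_neg at h
    have hsS : s ∈ S := ⟨⟨le_trans ht₀a hs.1.le, hs.2⟩, h⟩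
    exact absurd (le_csSup hSbdd hsS) (not_le.mpr hs.1)
  -- x₀ ≤ z a by continuity from the right
  have hxa : x₀ ≤ z a := by
    have hne : (nhdsWithin a (Set.Ioc a t)).NeBot := by
      rw [← mem_closure_iff_nhdsWithin_neBot, closure_Ioc hat.ne]
      exact ⟨le_refl _, hat'⟩
    have hct : Filter.Tendsto z (nhdsWithin a (Set.Ioc a t)) (nhds (z a)) := by
      apply ((hz a (by simp only [Set.mem_Ici]; linarith)).mono ?_)
      intro s hs
      simp only [Set.mem_Ici]
      have := hs.1
      linarith
    exact ge_of_tendsto hct (Filter.Eventually.mono self_mem_nhdsWithin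
      (fun s hs => (hgt s hs).le))
  have hge : ∀ s ∈ Set.Icc a t, x₀ ≤ z s := by
    intro s hs
    rcases hs.1.eq_or_lt with h | h
    · exact h ▸ hxa
    · exact (hgt s ⟨h, hs.2⟩).le
  -- bound the integral from a to t
  have hIbound : (∫ s in a..t, g s) ≤ c + δ := by
    rcases le_or_gt (a + 1) t with h1 | h1
    · have hsplit : (∫ s in a..t, g s) =
          (∫ s in a..(a+1), g s) + ∫ s in (a+1)..t, g s :=
        (integral_add_adjacent_intervals (hgint _ _ ht₀a (by linarith))
          (hgint _ _ (by linarith) (le_trans ht₀a hat'))).symm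
      have hb1 : (∫ s in a..(a+1), g s) ≤ c + δ := by
        have := integral_mono_on (by linarith : a ≤ a + 1)
          (hgint _ _ ht₀a (by linarith)) (_root_.intervalIntegrable_const (c := c + δ))
          (fun s hs => by
            have h1 : -c ≤ f (z (s - 1), z s) := hfc _ _
            have h2 : d s ≤ δ := hdδ s (by linarith [hs.1])
            simp only [hgdef]
            linarith)
        simpa using this
      have hb2 : (∫ s in (a+1)..t, g s) ≤ 0 := by
        have := integral_mono_on h1
          (hgint _ _ (by linarith) (le_trans ht₀a hat'))
          (_root_.intervalIntegrable_const (c := (0:ℝ)))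
          (fun s hs => by
            have hs1 : x₀ ≤ z (s - 1) :=
              hge (s - 1) ⟨by linarith [hs.1], by linarith [hs.2]⟩
            have hs2 : x₀ ≤ z s := hge s ⟨by linarith [hs.1], hs.2⟩
            have h3 : δ ≤ f (z (s - 1), z s) := hfδ _ _ hs1 hs2
            have h2 : d s ≤ δ := hdδ s (by linarith [hs.1])
            simp only [hgdef]
            linarith)
        simpa using this
      linarith
    · have := integral_mono_on hat'
        (hgint _ _ ht₀a (le_trans ht₀a hat'))
        (_root_.intervalIntegrable_const (c := c + δ))
        (fun s hs => by
          have hc1 : -c ≤ f (z (s - 1), z s) := hfc _ _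
          have h2 : d s ≤ δ := hdδ s (by linarith [hs.1])
          simp only [hgdef]
          linarith)
      rw [intervalIntegral.integral_const, smul_eq_mul] at this
      nlinarith [this, h1, hc, hδ]
  -- reconstruct z t from the integral equation
  have hkey : z t = z a + (∫ s in a..t, g s) + (u t - u a) := by
    have h1 := heq t ht
    have h2 := heq a ht₀a
    have hadd : (∫ s in t₀..a, g s) + (∫ s in a..t, g s) = ∫ s in t₀..t, g s :=
      integral_add_adjacent_intervals (hgint _ _ (le_refl _) ht₀a)
        (hgint _ _ ht₀a (le_trans ht₀a hat'))
    simp only [hgdef] at h1 h2 hadd ⊢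
    linarith
  refine ⟨a, ⟨ht₀a, hat'⟩, le_trans ?_ (le_max_right _ _)⟩
  rw [hkey]
  linarith
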